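/- The functions of Φ are linearly independent (as functions on Ω); hence Φ is a basis of the C¹ isogeometric space W := span Φ. -/

import Mathlib

noncomputable section
open Set

namespace TwoPatch



/-- Cox–de Boor recursion for B-splines over the knot sequence `t`.  Degree-`0`
B-splines are the characteristic functions of `[t i, t (i+1))`, closed at the
right endpoint when `t (i+1) = 1` (the right end of the parametric domain),
and the usual convention `0/0 = 0` is used in the recursion. -/
def coxDeBoor (t : ℕ → ℝ) : ℕ → ℕ → ℝ → ℝ
  | 0, i, x =>
      if (t i ≤ x ∧ x < t (i + 1)) ∨ (t i < t (i + 1) ∧ t (i + 1) = 1 ∧ x = 1) then 1 else 0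
  | (d + 1), i, x =>
      (if t (i + d + 1) = t i then 0 else (x - t i) / (t (i + d + 1) - t i)) *
          coxDeBoor t d i x +
        (if t (i + d + 2) = t (i + 1) then 0
          else (t (i + d + 2) - x) / (t (i + d + 2) - t (i + 1))) *
          coxDeBoor t d (i + 1) x

/-- The open knot vector on `[0,1]` of degree `dg`:  `0` and `1` appear with
multiplicity `dg + 1` and each of the `k` inner breakpoints `τ 0 < … < τ (k-1)`
appears with multiplicity `m`. -/
def openKnots (dg m k : ℕ) (τ : ℕ → ℝ) (j : ℕ) : ℝ :=
  if j ≤ dg then 0 else if dg + k * m < j then 1 else τ ((j - (dg + 1)) / m)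

/-- The `i`-th B-spline of degree `dg`, inner-knot multiplicity `m`, over the
breakpoints `τ 0, …, τ (k-1)`. -/
def Bspl (dg m k : ℕ) (τ : ℕ → ℝ) (i : ℕ) : ℝ → ℝ :=
  coxDeBoor (openKnots dg m k τ) dg i

/-- The dimension of the corresponding spline space. -/
def sdim (dg m k : ℕ) : ℕ := dg + 1 + k * m

/-- The univariate spline space, as a subspace of `ℝ → ℝ`. -/
def splineSpace (dg m k : ℕ) (τ : ℕ → ℝ) : Submodule ℝ (ℝ → ℝ) :=
  Submodule.span ℝ (Bspl dg m k τ '' Set.Iio (sdim dg m k))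

/-- The tensor-product spline space `span {g(ξ₁)h(ξ₂) : g, h ∈ S}`. -/
def tensorSpace (dg m k : ℕ) (τ : ℕ → ℝ) : Submodule ℝ (ℝ × ℝ → ℝ) :=
  Submodule.span ℝ
    {f | ∃ g ∈ splineSpace dg m k τ, ∃ h ∈ splineSpace dg m k τ,
        f = fun q : ℝ × ℝ => g q.1 * h q.2}

/-- The parametric interval `[0,1]`. -/
def I01 : Set ℝ := Set.Icc 0 1

/-- The parametric square `[0,1]²`. -/
def sq : Set (ℝ × ℝ) := Set.Icc (0, 0) (1, 1)

/-- Derivative of a univariate function within `[0,1]` (one-sided at the endpoints). -/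
def d01 (g : ℝ → ℝ) (x : ℝ) : ℝ := derivWithin g I01 x

/-- First partial derivative (within `[0,1]` in the first variable). -/
def pd1 (f : ℝ × ℝ → ℝ) (q : ℝ × ℝ) : ℝ := derivWithin (fun s => f (s, q.2)) I01 q.1

/-- Second partial derivative (within `[0,1]` in the second variable). -/
def pd2 (f : ℝ × ℝ → ℝ) (q : ℝ × ℝ) : ℝ := derivWithin (fun s => f (q.1, s)) I01 q.2

/-- First partial derivative of a map into `ℝ²`. -/
def pd1v (F : ℝ × ℝ → ℝ × ℝ) (q : ℝ × ℝ) : ℝ × ℝ :=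
  (pd1 (fun x => (F x).1) q, pd1 (fun x => (F x).2) q)

/-- Second partial derivative of a map into `ℝ²`. -/
def pd2v (F : ℝ × ℝ → ℝ × ℝ) (q : ℝ × ℝ) : ℝ × ℝ :=
  (pd2 (fun x => (F x).1) q, pd2 (fun x => (F x).2) q)

/-- Jacobian determinant. -/
def jacDet (F : ℝ × ℝ → ℝ × ℝ) (q : ℝ × ℝ) : ℝ :=
  pd1 (fun x => (F x).1) q * pd2 (fun x => (F x).2) q -
    pd1 (fun x => (F x).2) q * pd2 (fun x => (F x).1) q

/-- The Jacobian matrix. -/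
def jacMat (F : ℝ × ℝ → ℝ × ℝ) (q : ℝ × ℝ) : Matrix (Fin 2) (Fin 2) ℝ :=
  !![pd1 (fun x => (F x).1) q, pd2 (fun x => (F x).1) q;
     pd1 (fun x => (F x).2) q, pd2 (fun x => (F x).2) q]

/-- Polynomials of degree at most one ("linear functions"). -/
def IsLinearPoly (a : ℝ → ℝ) : Prop := ∃ c₀ c₁ : ℝ, a = fun x => c₀ + c₁ * x

/-- Breakpoints extended by the endpoints `0` and `1`. -/
def extBpt (k : ℕ) (τ : ℕ → ℝ) (i : ℕ) : ℝ :=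
  if i = 0 then 0 else if i ≤ k then τ (i - 1) else 1

/-- One dyadic refinement of the breakpoint set `τ 0 < … < τ (k-1)`:
the old breakpoints together with the midpoints of the `k+1` intervals
determined by `{0} ∪ T ∪ {1}`. -/
def dyadicOnce (k : ℕ) (τ : ℕ → ℝ) (j : ℕ) : ℝ :=
  if j % 2 = 1 then τ (j / 2) else (extBpt k τ (j / 2) + extBpt k τ (j / 2 + 1)) / 2

/-- Number of breakpoints at level `ℓ`. -/
def levelK (k : ℕ) : ℕ → ℕ
  | 0 => k
  | ℓ + 1 => 2 * levelK k ℓ + 1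

/-- Breakpoints at level `ℓ` (iterated dyadic refinement). -/
def levelτ (k : ℕ) (τ : ℕ → ℝ) : ℕ → ℕ → ℝ
  | 0 => τ
  | ℓ + 1 => dyadicOnce (levelK k ℓ) (levelτ k τ ℓ)

/-- Pullback of the interior basis functions: `N_i^{p,r}(ξ₁) N_j^{p,r}(ξ₂)`. -/
def fOmega (p r k : ℕ) (τ : ℕ → ℝ) (i j : ℕ) (q : ℝ × ℝ) : ℝ :=
  Bspl p (p - r) k τ i q.1 * Bspl p (p - r) k τ j q.2

/-- Pullback of the interface basis function `φ_{Γ₀,i}` on the patch with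
gluing datum `βS`. -/
def fGamma0 (p r k : ℕ) (τ : ℕ → ℝ) (βS : ℝ → ℝ) (i : ℕ) (q : ℝ × ℝ) : ℝ :=
  Bspl p (p - r - 1) k τ i q.2 *
      (Bspl p (p - r) k τ 0 q.1 + Bspl p (p - r) k τ 1 q.1) +
    βS q.2 * d01 (Bspl p (p - r - 1) k τ i) q.2 * (τ 0 / (p : ℝ)) * Bspl p (p - r) k τ 1 q.1

/-- Pullback of the interface basis function `φ_{Γ₁,i}` on the patch with
gluing datum `αS`. -/
def fGamma1 (p r k : ℕ) (τ : ℕ → ℝ) (αS : ℝ → ℝ) (i : ℕ) (q : ℝ × ℝ) : ℝ :=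
  αS q.2 * Bspl (p - 1) (p - r - 1) k τ i q.2 * Bspl p (p - r) k τ 1 q.1

/-- Support of a function on the domain `Ω`. -/
def suppOn (Ω : Set (ℝ × ℝ)) (φ : ℝ × ℝ → ℝ) : Set (ℝ × ℝ) :=
  closure {x | x ∈ Ω ∧ φ x ≠ 0}

/-- An analysis-suitable `G¹` two-patch geometry, on the spline space of degree
`p`, regularity `r`, with `k` inner breakpoints `τ 0 < … < τ (k-1)`.  The two
geometry mappings `FL` and `FR` are regular spline parameterizations of the two
patches, and `αL, αR, βL, βR` are the linear gluing data. -/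
structure ASG1 where
  p : ℕ
  r : ℕ
  k : ℕ
  τ : ℕ → ℝ
  hp : 3 ≤ p
  hr : 1 ≤ r
  hrp : r ≤ p - 2
  hτpos : ∀ i < k, 0 < τ i
  hτlt : ∀ i < k, τ i < 1
  hτmono : ∀ i, i + 1 < k → τ i < τ (i + 1)
  /-- left geometry mapping -/
  FL : ℝ × ℝ → ℝ × ℝ
  /-- right geometry mapping -/
  FR : ℝ × ℝ → ℝ × ℝ
  hFL1 : (fun q => (FL q).1) ∈ tensorSpace p (p - r) k τ
  hFL2 : (fun q => (FL q).2) ∈ tensorSpace p (p - r) k τ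
  hFR1 : (fun q => (FR q).1) ∈ tensorSpace p (p - r) k τ
  hFR2 : (fun q => (FR q).2) ∈ tensorSpace p (p - r) k τ
  hFLc1 : ContDiffOn ℝ 1 FL sq
  hFRc1 : ContDiffOn ℝ 1 FR sq
  hFLinj : Set.InjOn FL sq
  hFRinj : Set.InjOn FR sq
  hFLjac : ∀ q ∈ sq, jacDet FL q ≠ 0
  hFRjac : ∀ q ∈ sq, jacDet FR q ≠ 0
  /-- the two patches share the interface `ξ₁ = 0` -/
  hIface : ∀ ξ ∈ I01, FL (0, ξ) = FR (0, ξ)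
  /-- the patches intersect exactly in the common interface -/
  hGamma : FL '' sq ∩ FR '' sq = (fun ξ : ℝ => FL (0, ξ)) '' I01
  /-- gluing data -/
  αL : ℝ → ℝ
  αR : ℝ → ℝ
  βL : ℝ → ℝ
  βR : ℝ → ℝ
  hαLlin : IsLinearPoly αL
  hαRlin : IsLinearPoly αR
  hβLlin : IsLinearPoly βL
  hβRlin : IsLinearPoly βR
  hαneg : ∀ ξ ∈ I01, αL ξ * αR ξ < 0
  /-- the analysis-suitable `G¹` condition -/
  hG1 : ∀ ξ ∈ I01,
      αR ξ • pd1v FL (0, ξ) - αL ξ • pd1v FR (0, ξ) +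
          (αL ξ * βR ξ - αR ξ * βL ξ) • pd2v FL (0, ξ) = 0

/-- The function `β = α^(L) β^(R) − α^(R) β^(L)`. -/
def ASG1.beta (G : ASG1) : ℝ → ℝ := fun ξ => G.αL ξ * G.βR ξ - G.αR ξ * G.βL ξ

/-- The left patch `Ω^(L)`. -/
def ASG1.ΩL (G : ASG1) : Set (ℝ × ℝ) := G.FL '' sq

/-- The right patch `Ω^(R)`. -/
def ASG1.ΩR (G : ASG1) : Set (ℝ × ℝ) := G.FR '' sq

/-- The two-patch domain `Ω = Ω^(L) ∪ Ω^(R)`. -/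
def ASG1.dom (G : ASG1) : Set (ℝ × ℝ) := G.ΩL ∪ G.ΩR

/-- The interface `Γ`. -/
def ASG1.iface (G : ASG1) : Set (ℝ × ℝ) := (fun ξ : ℝ => G.FL (0, ξ)) '' I01

-- The function on `Ω` whose pullbacks to the two patches are `fL` and `fR`
-- (extended by `0` outside `Ω`).
open Classical in
def ASG1.glue (G : ASG1) (fL fR : ℝ × ℝ → ℝ) (x : ℝ × ℝ) : ℝ :=
  if x ∈ G.ΩL then fL (Function.invFunOn G.FL sq x)
  else if x ∈ G.ΩR then fR (Function.invFunOn G.FR sq x)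
  else 0

/-- Indices for the basis `Φ` of the `C¹` space `W`. -/
inductive PhiIdx where
  | inL (i j : ℕ) : PhiIdx
  | inR (i j : ℕ) : PhiIdx
  | g0 (i : ℕ) : PhiIdx
  | g1 (i : ℕ) : PhiIdx

/-- The valid index ranges for the basis `Φ` (for degree `p`, regularity `r`,
`k` inner breakpoints). -/
def PhiIdx.valid (p r k : ℕ) : PhiIdx → Prop
  | .inL i j => 2 ≤ i ∧ i < sdim p (p - r) k ∧ j < sdim p (p - r) k
  | .inR i j => 2 ≤ i ∧ i < sdim p (p - r) k ∧ j < sdim p (p - r) k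
  | .g0 i => i < sdim p (p - r - 1) k
  | .g1 i => i < sdim (p - 1) (p - r - 1) k

/-- The basis functions of the `C¹` space `W`, for breakpoints `τ' 0 < … < τ' (k'-1)`. -/
def ASG1.phiAt (G : ASG1) (k' : ℕ) (τ' : ℕ → ℝ) : PhiIdx → ℝ × ℝ → ℝ
  | .inL i j => G.glue (fOmega G.p G.r k' τ' i j) (fun _ => 0)
  | .inR i j => G.glue (fun _ => 0) (fOmega G.p G.r k' τ' i j)
  | .g0 i => G.glue (fGamma0 G.p G.r k' τ' G.βL i) (fGamma0 G.p G.r k' τ' G.βR i)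
  | .g1 i => G.glue (fGamma1 G.p G.r k' τ' G.αL i) (fGamma1 G.p G.r k' τ' G.αR i)

/-- The level-`ℓ` basis functions. -/
def ASG1.phiLvl (G : ASG1) (ℓ : ℕ) : PhiIdx → ℝ × ℝ → ℝ :=
  G.phiAt (levelK G.k ℓ) (levelτ G.k G.τ ℓ)

/-- The level-`ℓ` basis `Φ^ℓ`, as a set of functions on the two-patch domain. -/
def ASG1.PhiSetLvl (G : ASG1) (ℓ : ℕ) : Set (ℝ × ℝ → ℝ) :=
  G.phiLvl ℓ '' {e | e.valid G.p G.r (levelK G.k ℓ)}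

/-- The basis `Φ` (level `0`). -/
def ASG1.PhiSet (G : ASG1) : Set (ℝ × ℝ → ℝ) := G.PhiSetLvl 0


/-! ### Auxiliary development for the proof -/

section Knots

variable {dg m k : ℕ} {τ : ℕ → ℝ}

/-- Strict monotonicity of the breakpoints. -/
lemma tau_strict (hτmono : ∀ i, i + 1 < k → τ i < τ (i + 1)) :
    ∀ a b, a < b → b < k → τ a < τ b := by
  intro a b hab hbk
  induction b with
  | zero => omega
  | succ b ih =>
    rcases Nat.lt_or_ge a b with h | h
    · exact (ih h (by omega)).trans (hτmono b (by omega))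
    · have : a = b := by omega
      subst this
      exact hτmono a hbk

lemma openKnots_zero (hj : j ≤ dg) : openKnots dg m k τ j = 0 := by
  simp [openKnots, hj]

lemma openKnots_one (hj : dg + k * m < j) : openKnots dg m k τ j = 1 := by
  have : ¬ j ≤ dg := by omega
  simp [openKnots, this, hj]

lemma openKnots_mid (h1 : dg < j) (h2 : j ≤ dg + k * m) :
    openKnots dg m k τ j = τ ((j - (dg + 1)) / m) := by
  have h3 : ¬ j ≤ dg := by omega
  have h4 : ¬ dg + k * m < j := by omega
  simp [openKnots, h3, h4]

lemma mid_idx_lt (hm : 1 ≤ m) (h1 : dg < j) (h2 : j ≤ dg + k * m) :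
    (j - (dg + 1)) / m < k := by
  have : j - (dg + 1) < k * m := by omega
  rw [Nat.div_lt_iff_lt_mul (by omega)]
  omega

set_option linter.unusedSectionVars false

variable (hm : 1 ≤ m) (hτpos : ∀ i < k, 0 < τ i) (hτlt : ∀ i < k, τ i < 1)
  (hτmono : ∀ i, i + 1 < k → τ i < τ (i + 1))

include hm hτpos hτlt in
lemma openKnots_nonneg (j : ℕ) : 0 ≤ openKnots dg m k τ j := by
  rcases le_or_gt j dg with h | h
  · rw [openKnots_zero h]
  rcases le_or_gt j (dg + k * m) with h2 | h2
  · rw [openKnots_mid h h2]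
    exact (hτpos _ (mid_idx_lt hm h h2)).le
  · rw [openKnots_one h2]; norm_num

include hm hτpos hτlt in
lemma openKnots_le_one (j : ℕ) : openKnots dg m k τ j ≤ 1 := by
  rcases le_or_gt j dg with h | h
  · rw [openKnots_zero h]; norm_num
  rcases le_or_gt j (dg + k * m) with h2 | h2
  · rw [openKnots_mid h h2]
    exact (hτlt _ (mid_idx_lt hm h h2)).le
  · rw [openKnots_one h2]

include hm hτpos hτlt hτmono in
lemma openKnots_mono : Monotone (openKnots dg m k τ) := by
  apply monotone_nat_of_le_succ
  intro j
  rcases le_or_gt (j + 1) dg with h | h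
  · rw [openKnots_zero (by omega : j ≤ dg), openKnots_zero h]
  rcases le_or_gt j dg with hj | hj
  · rw [openKnots_zero hj]
    exact openKnots_nonneg hm hτpos hτlt _
  rcases le_or_gt (j + 1) (dg + k * m) with h2 | h2
  · rw [openKnots_mid hj (by omega), openKnots_mid h h2]
    have ha : (j - (dg + 1)) / m ≤ (j + 1 - (dg + 1)) / m :=
      Nat.div_le_div_right (by omega)
    rcases eq_or_lt_of_le ha with he | hl
    · rw [he]
    · exact (tau_strict hτmono _ _ hl (mid_idx_lt hm h h2)).le
  · rw [openKnots_one h2]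
    exact openKnots_le_one hm hτpos hτlt _

include hm hτpos hτlt hτmono in
/-- Each window of `dg+2` consecutive knots with a valid starting index is
non-degenerate. -/
lemma openKnots_window (hmd : m ≤ dg) (hi : i < sdim dg m k) :
    openKnots dg m k τ i < openKnots dg m k τ (i + dg + 1) := by
  rcases le_or_gt i dg with h | h
  · rw [openKnots_zero h]
    have h1 : dg < i + dg + 1 := by omega
    rcases le_or_gt (i + dg + 1) (dg + k * m) with h2 | h2
    · rw [openKnots_mid h1 h2]
      exact hτpos _ (mid_idx_lt hm h1 h2)
    · rw [openKnots_one h2]; norm_num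
  · have h2 : i ≤ dg + k * m := by
      have := hi; unfold sdim at this; omega
    rw [openKnots_mid h h2]
    have hlt1 : τ ((i - (dg + 1)) / m) < 1 := hτlt _ (mid_idx_lt hm h h2)
    rcases le_or_gt (i + dg + 1) (dg + k * m) with h3 | h3
    · rw [openKnots_mid (by omega) h3]
      apply tau_strict hτmono
      · have hia : i - (dg + 1) + m ≤ i + dg + 1 - (dg + 1) := by omega
        calc (i - (dg + 1)) / m < (i - (dg + 1)) / m + 1 := Nat.lt_succ_self _
          _ ≤ (i - (dg + 1) + m) / m := by
              rw [Nat.add_div_right _ (by omega)]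
          _ ≤ (i + dg + 1 - (dg + 1)) / m := Nat.div_le_div_right hia
      · exact mid_idx_lt hm (by omega) h3
    · rw [openKnots_one h3]
      exact hlt1

end Knots


section Marsden

variable {t : ℕ → ℝ} {x tt : ℝ} {d i j : ℕ}

lemma coxDeBoor_zero_eq :
    coxDeBoor t 0 i x =
      if (t i ≤ x ∧ x < t (i + 1)) ∨ (t i < t (i + 1) ∧ t (i + 1) = 1 ∧ x = 1) then 1 else 0 :=
  rfl

lemma coxDeBoor_succ_eq :
    coxDeBoor t (d + 1) i x =
      (if t (i + d + 1) = t i then 0 else (x - t i) / (t (i + d + 1) - t i)) *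
          coxDeBoor t d i x +
        (if t (i + d + 2) = t (i + 1) then 0
          else (t (i + d + 2) - x) / (t (i + d + 2) - t (i + 1))) *
          coxDeBoor t d (i + 1) x :=
  rfl

/-- Support of B-splines: vanishing to the left. -/
lemma coxDeBoor_eq_zero_left (ht1 : ∀ j, t j ≤ 1) (hmono : Monotone t) :
    ∀ d i, x < t i → coxDeBoor t d i x = 0 := by
  intro d
  induction d with
  | zero =>
    intro i hx
    rw [coxDeBoor_zero_eq, if_neg]
    rintro (⟨h1, _⟩ | ⟨_, _, h3⟩)
    · linarith
    · have := ht1 i; linarith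
  | succ d ih =>
    intro i hx
    rw [coxDeBoor_succ_eq, ih i hx, ih (i + 1) (lt_of_lt_of_le hx (hmono (by omega)))]
    ring

/-- Support of B-splines: vanishing to the right (away from `x = 1`). -/
lemma coxDeBoor_eq_zero_right (hmono : Monotone t) (hx1 : x < 1) :
    ∀ d i, t (i + d + 1) ≤ x → coxDeBoor t d i x = 0 := by
  intro d
  induction d with
  | zero =>
    intro i hx
    rw [coxDeBoor_zero_eq, if_neg]
    rintro (⟨_, h2⟩ | ⟨_, _, h3⟩)
    · have : t (i + 0 + 1) = t (i + 1) := by norm_num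
      rw [this] at hx; linarith
    · linarith
  | succ d ih =>
    intro i hx
    have h1 : t (i + d + 1) ≤ x := le_trans (hmono (by omega)) hx
    have h2 : t (i + 1 + d + 1) ≤ x := by
      have : i + 1 + d + 1 = i + d + 2 := by omega
      rw [this]; exact hx
    rw [coxDeBoor_succ_eq, ih i h1, ih (i + 1) h2]
    ring

/-- The dual polynomial `ψ_{i,d}(t)` in Marsden's identity. -/
def psi (t : ℕ → ℝ) (i d : ℕ) (tt : ℝ) : ℝ := ∏ l ∈ Finset.range d, (tt - t (i + l + 1))

lemma psi_zero : psi t i 0 tt = 1 := by simp [psi]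

lemma psi_succ_right : psi t i (d + 1) tt = psi t i d tt * (tt - t (i + d + 1)) := by
  unfold psi; rw [Finset.prod_range_succ]

lemma psi_succ_left : psi t i (d + 1) tt = (tt - t (i + 1)) * psi t (i + 1) d tt := by
  unfold psi
  rw [Finset.prod_range_succ', mul_comm]
  congr 1
  apply Finset.prod_congr rfl
  intro l _
  rw [show i + (l + 1) + 1 = i + 1 + l + 1 by omega]

/-- **Marsden's identity**, on a nonempty knot span. -/
lemma marsden (ht1 : ∀ j, t j ≤ 1) (hmono : Monotone t)
    (hx1 : t j < x) (hx2 : x < t (j + 1)) :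
    ∀ d, d ≤ j → ∀ tt : ℝ,
      ∑ i ∈ Finset.range (j + 1), psi t i d tt * coxDeBoor t d i x = (tt - x) ^ d := by
  have hxlt1 : x < 1 := lt_of_lt_of_le hx2 (ht1 _)
  intro d
  induction d with
  | zero =>
    intro _ tt
    rw [Finset.sum_eq_single j]
    · rw [psi_zero, coxDeBoor_zero_eq, if_pos (Or.inl ⟨hx1.le, hx2⟩)]
      norm_num
    · intro i hi hne
      have hi' : i + 1 ≤ j := by
        simp only [Finset.mem_range] at hi; omega
      have : t (i + 0 + 1) ≤ x := by
        have : t (i + 0 + 1) ≤ t j := hmono (by omega)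
        linarith
      rw [coxDeBoor_eq_zero_right hmono hxlt1 0 i this, mul_zero]
    · intro h
      exact absurd (Finset.self_mem_range_succ j) h
  | succ d ih =>
    intro hd tt
    have hdj : d ≤ j := by omega
    -- the shifted coefficient function
    set W : ℕ → ℝ := fun i' =>
      ((tt - x) * psi t i' d tt -
          psi t i' (d + 1) tt *
            (if t (i' + d + 1) = t i' then 0 else (x - t i') / (t (i' + d + 1) - t i'))) *
        coxDeBoor t d i' x with hW
    have shift : ∀ i : ℕ,
        psi t i (d + 1) tt *
            (if t (i + d + 2) = t (i + 1) then 0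
              else (t (i + d + 2) - x) / (t (i + d + 2) - t (i + 1))) *
          coxDeBoor t d (i + 1) x = W (i + 1) := by
      intro i
      rw [hW]
      simp only
      rw [show i + 1 + d + 1 = i + d + 2 by omega]
      by_cases hc : t (i + d + 2) = t (i + 1)
      · rw [if_pos hc, if_pos hc]
        have hB : coxDeBoor t d (i + 1) x = 0 := by
          rcases lt_or_ge x (t (i + 1)) with h | h
          · exact coxDeBoor_eq_zero_left ht1 hmono d (i + 1) h
          · apply coxDeBoor_eq_zero_right hmono hxlt1 d (i + 1)
            rw [show i + 1 + d + 1 = i + d + 2 by omega, hc]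
            exact h
        rw [hB]; ring
      · rw [if_neg hc, if_neg hc]
        have hΔ : t (i + d + 2) - t (i + 1) ≠ 0 := sub_ne_zero.mpr hc
        have e1 : psi t i (d + 1) tt = (tt - t (i + 1)) * psi t (i + 1) d tt :=
          psi_succ_left
        have e2 : psi t (i + 1) (d + 1) tt = psi t (i + 1) d tt * (tt - t (i + d + 2)) := by
          rw [psi_succ_right, show i + 1 + d + 1 = i + d + 2 by omega]
        have coef : (tt - t (i + 1)) * psi t (i + 1) d tt *
              ((t (i + d + 2) - x) / (t (i + d + 2) - t (i + 1)))
            = (tt - x) * psi t (i + 1) d tt -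
              psi t (i + 1) d tt * (tt - t (i + d + 2)) *
                ((x - t (i + 1)) / (t (i + d + 2) - t (i + 1))) := by
          field_simp
          ring
        rw [e1, e2]
        linear_combination coxDeBoor t d (i + 1) x * coef
    calc
      ∑ i ∈ Finset.range (j + 1), psi t i (d + 1) tt * coxDeBoor t (d + 1) i x
          = ∑ i ∈ Finset.range (j + 1),
              (psi t i (d + 1) tt *
                  (if t (i + d + 1) = t i then 0 else (x - t i) / (t (i + d + 1) - t i)) *
                coxDeBoor t d i x +
              psi t i (d + 1) tt *
                  (if t (i + d + 2) = t (i + 1) then 0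
                    else (t (i + d + 2) - x) / (t (i + d + 2) - t (i + 1))) *
                coxDeBoor t d (i + 1) x) := by
        apply Finset.sum_congr rfl
        intro i _
        rw [coxDeBoor_succ_eq]
        ring
      _ = ∑ i ∈ Finset.range (j + 1),
            psi t i (d + 1) tt *
                (if t (i + d + 1) = t i then 0 else (x - t i) / (t (i + d + 1) - t i)) *
              coxDeBoor t d i x +
          ∑ i ∈ Finset.range (j + 1), W (i + 1) := by
        rw [Finset.sum_add_distrib]
        congr 1
        exact Finset.sum_congr rfl fun i _ => shift i
      _ = ∑ i ∈ Finset.range (j + 1),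
            psi t i (d + 1) tt *
                (if t (i + d + 1) = t i then 0 else (x - t i) / (t (i + d + 1) - t i)) *
              coxDeBoor t d i x +
          ∑ i ∈ Finset.range (j + 1), W i := by
        congr 1
        have hW0 : W 0 = 0 := by
          rw [hW]
          simp only
          have : t (0 + d + 1) ≤ x := by
            have h1 : t (0 + d + 1) ≤ t j := hmono (by omega)
            linarith
          rw [coxDeBoor_eq_zero_right hmono hxlt1 d 0 this]
          ring
        have hWj : W (j + 1) = 0 := by
          rw [hW]
          simp only
          rw [coxDeBoor_eq_zero_left ht1 hmono d (j + 1) hx2]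
          ring
        have h1 : ∑ i ∈ Finset.range (j + 2), W i
            = ∑ i ∈ Finset.range (j + 1), W (i + 1) + W 0 := Finset.sum_range_succ' W (j + 1)
        have h2 : ∑ i ∈ Finset.range (j + 2), W i
            = ∑ i ∈ Finset.range (j + 1), W i + W (j + 1) := Finset.sum_range_succ W (j + 1)
        rw [hW0] at h1
        rw [hWj] at h2
        rw [add_zero] at h1 h2
        rw [← h1, h2]
      _ = ∑ i ∈ Finset.range (j + 1), (tt - x) * (psi t i d tt * coxDeBoor t d i x) := by
        rw [← Finset.sum_add_distrib]
        apply Finset.sum_congr rfl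
        intro i _
        rw [hW]
        simp only
        ring
      _ = (tt - x) ^ (d + 1) := by
        rw [← Finset.mul_sum, ih hdj tt]
        ring

end Marsden


section PowIndep

/-- The functions `x ↦ (s − x) ^ dg`, `s = 0, …, dg`, are linearly independent
on any nonempty open interval. -/
lemma powshift_li {dg : ℕ} {a b : ℝ} (hab : a < b) :
    LinearIndependent ℝ (fun s : Fin (dg + 1) =>
      (Set.Ioo a b).restrict (fun x : ℝ => ((s : ℕ) - x : ℝ) ^ dg)) := by
  rw [Fintype.linearIndependent_iff]
  intro c hc
  set P : Polynomial ℝ :=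
    ∑ s : Fin (dg + 1), Polynomial.C (c s) * (Polynomial.C ((s : ℕ) : ℝ) - Polynomial.X) ^ dg
    with hP
  have hPeval : ∀ y : ℝ, P.eval y = ∑ s : Fin (dg + 1), c s * (((s : ℕ) : ℝ) - y) ^ dg := by
    intro y
    rw [hP, Polynomial.eval_finset_sum]
    simp
  have hProots : ∀ y ∈ Set.Ioo a b, P.eval y = 0 := by
    intro y hy
    rw [hPeval]
    have := congrFun hc ⟨y, hy⟩
    simpa [Set.restrict] using this
  have hP0 : P = 0 := by
    apply Polynomial.eq_zero_of_infinite_isRoot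
    apply Set.Infinite.mono _ (Set.Ioo_infinite hab)
    intro y hy
    exact hProots y hy
  have hall : ∀ y : ℝ, ∑ s : Fin (dg + 1), c s * (((s : ℕ) : ℝ) - y) ^ dg = 0 := by
    intro y
    rw [← hPeval, hP0, Polynomial.eval_zero]
  have step : ∀ n : ℕ,
      (∀ y : ℝ, ∑ s : Fin (dg + 1), c s * (((s : ℕ) : ℝ) - y) ^ (n + 1) = 0) →
      ∀ y : ℝ, ∑ s : Fin (dg + 1), c s * (((s : ℕ) : ℝ) - y) ^ n = 0 := by
    intro n h y
    have hd : HasDerivAt (fun y : ℝ => ∑ s : Fin (dg + 1), c s * (((s : ℕ) : ℝ) - y) ^ (n + 1))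
        (∑ s : Fin (dg + 1), c s * (((n : ℝ) + 1) * (((s : ℕ) : ℝ) - y) ^ n * (-1))) y := by
      apply HasDerivAt.fun_sum
      intro s _
      have h1 : HasDerivAt (fun y : ℝ => ((s : ℕ) : ℝ) - y) (-1) y :=
        (hasDerivAt_id y).const_sub _
      have h2 := h1.fun_pow (n + 1)
      have h3 := h2.const_mul (c s)
      convert h3 using 1
      · rfl
      push_cast
      ring
    have hfun : (fun y : ℝ => ∑ s : Fin (dg + 1), c s * (((s : ℕ) : ℝ) - y) ^ (n + 1))
        = fun _ : ℝ => (0 : ℝ) := funext h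
    rw [hfun] at hd
    have hz : (∑ s : Fin (dg + 1), c s * (((n : ℝ) + 1) * (((s : ℕ) : ℝ) - y) ^ n * (-1))) = 0 :=
      hd.unique (hasDerivAt_const y 0)
    have hnz : ((n : ℝ) + 1) ≠ 0 := by positivity
    have hz' : -(((n : ℝ) + 1)) * ∑ s : Fin (dg + 1), c s * (((s : ℕ) : ℝ) - y) ^ n = 0 := by
      rw [Finset.mul_sum, ← hz]
      exact Finset.sum_congr rfl fun s _ => by ring
    rcases mul_eq_zero.mp hz' with h4 | h4
    · exfalso; apply hnz; linarith
    · exact h4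
  have main : ∀ e : ℕ, ∀ y : ℝ, ∑ s : Fin (dg + 1), c s * (((s : ℕ) : ℝ) - y) ^ (dg - e) = 0 := by
    intro e
    induction e with
    | zero => simpa using hall
    | succ e ih =>
      rcases le_or_gt dg e with h | h
      · rw [show dg - (e + 1) = dg - e by omega]
        exact ih
      · apply step
        intro y
        rw [show dg - (e + 1) + 1 = dg - e by omega]
        exact ih y
  have pows : ∀ e : ℕ, e ≤ dg → ∑ s : Fin (dg + 1), c s * ((s : ℕ) : ℝ) ^ e = 0 := by
    intro e he
    have := main (dg - e) 0
    rw [show dg - (dg - e) = e by omega] at this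
    simpa using this
  set M : Matrix (Fin (dg + 1)) (Fin (dg + 1)) ℝ := fun e s => ((s : ℕ) : ℝ) ^ (e : ℕ) with hM
  have hMt : M = (Matrix.vandermonde (fun s : Fin (dg + 1) => ((s : ℕ) : ℝ))).transpose := by
    ext e s
    simp [hM, Matrix.transpose_apply, Matrix.vandermonde_apply]
  have hdet : M.det ≠ 0 := by
    rw [hMt, Matrix.det_transpose, Matrix.det_vandermonde]
    apply Finset.prod_ne_zero_iff.mpr
    intro i _
    apply Finset.prod_ne_zero_iff.mpr
    intro j hj
    have : (i : ℕ) < (j : ℕ) := by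
      simpa [Finset.mem_Ioi] using hj
    have : ((i : ℕ) : ℝ) < ((j : ℕ) : ℝ) := by exact_mod_cast this
    intro hcon
    rw [sub_eq_zero] at hcon
    linarith
  have hMc : M.mulVec c = 0 := by
    funext e
    have he : (e : ℕ) ≤ dg := by omega
    have := pows (e : ℕ) he
    rw [Matrix.mulVec, Pi.zero_apply]
    rw [← this]
    apply Finset.sum_congr rfl
    intro s _
    simp [hM, dotProduct]
    ring
  have hinj : Function.Injective M.mulVec :=
    Matrix.mulVec_injective_iff_isUnit.mpr ((Matrix.isUnit_iff_isUnit_det M).mpr hdet.isUnit)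
  have : c = 0 := by
    apply hinj
    rw [hMc, Matrix.mulVec_zero]
  intro s
  rw [this]
  rfl

end PowIndep


section UniLI

/-- Local linear independence of the `dg+1` active B-splines on a nonempty
knot span, via Marsden's identity. -/
lemma cdb_local_li {t : ℕ → ℝ} (ht1 : ∀ j, t j ≤ 1) (hmono : Monotone t) {dg j : ℕ}
    (hjd : dg ≤ j) (hj : t j < t (j + 1)) :
    LinearIndependent ℝ (fun l : Fin (dg + 1) =>
      (Set.Ioo (t j) (t (j + 1))).restrict (coxDeBoor t dg (j - dg + l))) := by
  set S := Set.Ioo (t j) (t (j + 1)) with hS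
  set fam : Fin (dg + 1) → (S → ℝ) :=
    fun l => S.restrict (coxDeBoor t dg (j - dg + l)) with hfam
  set V := Submodule.span ℝ (Set.range fam) with hV
  have hfd : FiniteDimensional ℝ V :=
    FiniteDimensional.span_of_finite ℝ (Set.finite_range fam)
  have claim1 : ∀ tt : ℝ, S.restrict (fun x : ℝ => (tt - x) ^ dg) ∈ V := by
    intro tt
    have heq : S.restrict (fun x : ℝ => (tt - x) ^ dg)
        = ∑ l : Fin (dg + 1), psi t (j - dg + l) dg tt • fam l := by
      funext z
      obtain ⟨x, hx⟩ := z
      have hx1 : x < 1 := lt_of_lt_of_le hx.2 (ht1 _)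
      have hmars := marsden ht1 hmono hx.1 hx.2 dg hjd tt
      have hzero : ∀ i' ∈ Finset.Ico 0 (j - dg),
          psi t i' dg tt * coxDeBoor t dg i' x = 0 := by
        intro i' hi'
        simp only [Finset.mem_Ico] at hi'
        have : t (i' + dg + 1) ≤ x := by
          have : t (i' + dg + 1) ≤ t j := hmono (by omega)
          linarith [hx.1]
        rw [coxDeBoor_eq_zero_right hmono hx1 dg i' this, mul_zero]
      have hsplit := Finset.sum_Ico_consecutive
        (fun i' => psi t i' dg tt * coxDeBoor t dg i' x)
        (Nat.zero_le (j - dg)) (show j - dg ≤ j + 1 by omega)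
      rw [Finset.range_eq_Ico, ← hsplit, Finset.sum_eq_zero hzero, zero_add,
        Finset.sum_Ico_eq_sum_range] at hmars
      rw [show j + 1 - (j - dg) = dg + 1 by omega] at hmars
      simp only [Set.restrict, Set.domRestrict_apply, Finset.sum_apply, Pi.smul_apply, smul_eq_mul]
      rw [← hmars]
      simp only [hfam, Set.restrict, Set.domRestrict_apply]
      rw [Fin.sum_univ_eq_sum_range
        (fun l => psi t (j - dg + l) dg tt * coxDeBoor t dg (j - dg + l) x)]
    rw [heq]
    exact Submodule.sum_mem _ fun l _ =>
      Submodule.smul_mem _ _ (Submodule.subset_span ⟨l, rfl⟩)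
  have hli0 := powshift_li (dg := dg) hj
  set q' : Fin (dg + 1) → V := fun s => ⟨_, claim1 ((s : ℕ) : ℝ)⟩ with hq'
  have hli' : LinearIndependent ℝ q' := by
    apply LinearIndependent.of_comp V.subtype
    exact hli0
  have hlow : dg + 1 ≤ Module.finrank ℝ V := by
    have := hli'.fintype_card_le_finrank
    simpa using this
  rw [linearIndependent_iff_card_eq_finrank_span]
  have hup : (Set.range fam).finrank ℝ ≤ dg + 1 := by
    have := finrank_range_le_card (R := ℝ) fam
    simpa using this
  have : (Set.range fam).finrank ℝ = Module.finrank ℝ V := rfl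
  simp only [Fintype.card_fin]
  omega

/-- Global linear independence of B-splines, from a relation on `(0,1)`. -/
lemma bspl_li {dg m k : ℕ} {τ : ℕ → ℝ} (hm : 1 ≤ m) (hmd : m ≤ dg)
    (hτpos : ∀ i < k, 0 < τ i) (hτlt : ∀ i < k, τ i < 1)
    (hτmono : ∀ i, i + 1 < k → τ i < τ (i + 1)) (c : ℕ → ℝ)
    (hrel : ∀ x ∈ Set.Ioo (0 : ℝ) 1,
      ∑ i ∈ Finset.range (sdim dg m k), c i * Bspl dg m k τ i x = 0) :
    ∀ i < sdim dg m k, c i = 0 := by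
  intro i hi
  set t := openKnots dg m k τ with ht
  have hmono : Monotone t := openKnots_mono hm hτpos hτlt hτmono
  have ht1 : ∀ j, t j ≤ 1 := fun j => openKnots_le_one hm hτpos hτlt j
  have ht0 : ∀ j, 0 ≤ t j := fun j => openKnots_nonneg hm hτpos hτlt j
  have hwin : t i < t (i + dg + 1) := openKnots_window hm hτpos hτlt hτmono hmd hi
  have hex : ∃ j, i ≤ j ∧ j ≤ i + dg ∧ t j < t (j + 1) := by
    by_contra hcon
    push_neg at hcon
    have hall : ∀ l, l ≤ dg + 1 → t (i + l) = t i := by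
      intro l hl
      induction l with
      | zero => rfl
      | succ l ih =>
        have h1 := hcon (i + l) (by omega) (by omega)
        have h2 : t (i + l) ≤ t (i + l + 1) := hmono (by omega)
        have h3 : t (i + l + 1) = t (i + l) := le_antisymm h1 h2
        rw [show i + (l + 1) = i + l + 1 by omega, h3, ih (by omega)]
    have := hall (dg + 1) (le_refl _)
    rw [show i + (dg + 1) = i + dg + 1 by omega] at this
    rw [this] at hwin
    exact lt_irrefl _ hwin
  obtain ⟨j, hij, hji, hj⟩ := hex
  have hjd : dg ≤ j := by
    by_contra h
    push_neg at h
    have h1 : t j = 0 := openKnots_zero (by omega)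
    have h2 : t (j + 1) = 0 := openKnots_zero (by omega)
    rw [h1, h2] at hj
    exact lt_irrefl _ hj
  have hjtop : j + 1 ≤ sdim dg m k := by
    by_contra h
    push_neg at h
    unfold sdim at h
    have h1 : t j = 1 := openKnots_one (by omega)
    have h2 : t (j + 1) = 1 := openKnots_one (by omega)
    rw [h1, h2] at hj
    exact lt_irrefl _ hj
  have hloc := cdb_local_li ht1 hmono hjd hj
  rw [Fintype.linearIndependent_iff] at hloc
  have hrel2 : ∑ l : Fin (dg + 1), c (j - dg + (l : ℕ)) •
      (Set.Ioo (t j) (t (j + 1))).restrict (coxDeBoor t dg (j - dg + (l : ℕ))) = 0 := by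
    funext z
    obtain ⟨x, hx⟩ := z
    have hx1 : x < 1 := lt_of_lt_of_le hx.2 (ht1 _)
    have hx01 : x ∈ Set.Ioo (0 : ℝ) 1 :=
      ⟨lt_of_le_of_lt (ht0 j) hx.1, hx1⟩
    have hr := hrel x hx01
    have hzero1 : ∀ i' ∈ Finset.Ico 0 (j - dg),
        c i' * Bspl dg m k τ i' x = 0 := by
      intro i' hi'
      simp only [Finset.mem_Ico] at hi'
      have hle : t (i' + dg + 1) ≤ x := by
        have : t (i' + dg + 1) ≤ t j := hmono (by omega)
        linarith [hx.1]
      have : Bspl dg m k τ i' x = 0 := coxDeBoor_eq_zero_right hmono hx1 dg i' hle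
      rw [this, mul_zero]
    have hzero2 : ∀ i' ∈ Finset.Ico (j + 1) (sdim dg m k),
        c i' * Bspl dg m k τ i' x = 0 := by
      intro i' hi'
      simp only [Finset.mem_Ico] at hi'
      have hlt : x < t i' := lt_of_lt_of_le hx.2 (hmono (by omega))
      have : Bspl dg m k τ i' x = 0 := coxDeBoor_eq_zero_left ht1 hmono dg i' hlt
      rw [this, mul_zero]
    have hs1 := Finset.sum_Ico_consecutive
      (fun i' => c i' * Bspl dg m k τ i' x)
      (Nat.zero_le (j - dg)) (show j - dg ≤ j + 1 by omega)
    have hs2 := Finset.sum_Ico_consecutive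
      (fun i' => c i' * Bspl dg m k τ i' x)
      (show j - dg ≤ j + 1 by omega) hjtop
    rw [Finset.range_eq_Ico, ← Finset.sum_Ico_consecutive _ (Nat.zero_le (j - dg))
      (show j - dg ≤ sdim dg m k by omega), ← hs2,
      Finset.sum_eq_zero hzero1, Finset.sum_eq_zero hzero2, zero_add, add_zero,
      Finset.sum_Ico_eq_sum_range, show j + 1 - (j - dg) = dg + 1 by omega] at hr
    simp only [Finset.sum_apply, Pi.smul_apply, Set.restrict, Set.domRestrict_apply, smul_eq_mul,
      Pi.zero_apply]
    rw [Fin.sum_univ_eq_sum_range (fun l => c (j - dg + l) * coxDeBoor t dg (j - dg + l) x)]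
    exact hr
  have hz := hloc _ hrel2
  have hz2 := hz ⟨i - (j - dg), by omega⟩
  simpa [show j - dg + (i - (j - dg)) = i by omega] using hz2

end UniLI


section Glue

instance : DecidableEq PhiIdx := fun _ _ => Classical.dec _

lemma mem_sq {a b : ℝ} (h1 : 0 ≤ a) (h2 : a ≤ 1) (h3 : 0 ≤ b) (h4 : b ≤ 1) :
    ((a, b) : ℝ × ℝ) ∈ sq := by
  constructor
  · exact ⟨h1, h3⟩
  · exact ⟨h2, h4⟩

lemma ASG1.glue_FL (G : ASG1) (fL fR : ℝ × ℝ → ℝ) {q : ℝ × ℝ} (hq : q ∈ sq) :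
    G.glue fL fR (G.FL q) = fL q := by
  have hmem : G.FL q ∈ G.ΩL := ⟨q, hq, rfl⟩
  rw [ASG1.glue, if_pos hmem]
  congr 1
  exact G.hFLinj.leftInvOn_invFunOn hq

lemma ASG1.glue_FR (G : ASG1) (fL fR : ℝ × ℝ → ℝ) {q : ℝ × ℝ} (hq : q ∈ sq)
    (hq1 : q.1 ≠ 0) : G.glue fL fR (G.FR q) = fR q := by
  have hmem : G.FR q ∈ G.ΩR := ⟨q, hq, rfl⟩
  have hnL : G.FR q ∉ G.ΩL := by
    intro hL
    have hmem2 : G.FR q ∈ G.FL '' sq ∩ G.FR '' sq := ⟨hL, hmem⟩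
    rw [G.hGamma] at hmem2
    obtain ⟨ξ, hξ, hξeq⟩ := hmem2
    have h0 : ((0 : ℝ), ξ) ∈ sq := mem_sq le_rfl zero_le_one hξ.1 hξ.2
    have heq2 : G.FR (0, ξ) = G.FR q := by rw [← G.hIface ξ hξ]; exact hξeq
    have := G.hFRinj h0 hq heq2
    apply hq1
    rw [← this]
  rw [ASG1.glue, if_neg hnL, if_pos hmem]
  congr 1
  exact G.hFRinj.leftInvOn_invFunOn hq

/-- The coefficient, as a function of `ξ₂`, of `N_i^{p,r}(ξ₁)` in the pullback
of a basis function to the patch `S ∈ {L, R}` (`L` iff `side = true`), with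
gluing data `α`, `β`. -/
def wSide (p r k : ℕ) (τ : ℕ → ℝ) (α β : ℝ → ℝ) (side : Bool) : PhiIdx → ℕ → ℝ → ℝ
  | .inL i' j => fun i y => if side = true ∧ i' = i then Bspl p (p - r) k τ j y else 0
  | .inR i' j => fun i y => if side = false ∧ i' = i then Bspl p (p - r) k τ j y else 0
  | .g0 i0 => fun i y =>
      if i = 0 then Bspl p (p - r - 1) k τ i0 y
      else if i = 1 then Bspl p (p - r - 1) k τ i0 y +
        β y * d01 (Bspl p (p - r - 1) k τ i0) y * (τ 0 / (p : ℝ))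
      else 0
  | .g1 i1 => fun i y => if i = 1 then α y * Bspl (p - 1) (p - r - 1) k τ i1 y else 0

lemma sum_two {n : ℕ} (hn : 2 ≤ n) (f : ℕ → ℝ) (h : ∀ i, 2 ≤ i → f i = 0) :
    ∑ i ∈ Finset.range n, f i = f 0 + f 1 := by
  induction n, hn using Nat.le_induction with
  | base => rw [Finset.sum_range_succ, Finset.sum_range_succ, Finset.sum_range_zero, zero_add]
  | succ n hn ih => rw [Finset.sum_range_succ, ih, h n hn, add_zero]

lemma sum_delta_mul {n i' : ℕ} (hi' : i' < n) (C : ℝ) (f : ℕ → ℝ) :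
    ∑ i ∈ Finset.range n, (if i' = i then C else 0) * f i = C * f i' := by
  rw [Finset.sum_eq_single i']
  · rw [if_pos rfl]
  · intro i _ hne
    rw [if_neg (fun h => hne h.symm), zero_mul]
  · intro h
    exact absurd (Finset.mem_range.mpr hi') h

/-- Pullback of the basis functions to the left patch. -/
lemma pullL (G : ASG1) {e : PhiIdx} (he : e.valid G.p G.r G.k) {ξ₁ ξ₂ : ℝ}
    (h1 : 0 ≤ ξ₁) (h2 : ξ₁ ≤ 1) (h3 : 0 ≤ ξ₂) (h4 : ξ₂ ≤ 1) :
    G.phiAt G.k G.τ e (G.FL (ξ₁, ξ₂)) =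
      ∑ i ∈ Finset.range (sdim G.p (G.p - G.r) G.k),
        wSide G.p G.r G.k G.τ G.αL G.βL true e i ξ₂ * Bspl G.p (G.p - G.r) G.k G.τ i ξ₁ := by
  have hq : ((ξ₁, ξ₂) : ℝ × ℝ) ∈ sq := mem_sq h1 h2 h3 h4
  have hn2 : 2 ≤ sdim G.p (G.p - G.r) G.k := by
    have := G.hp; unfold sdim; omega
  cases e with
  | inL i' j =>
    rw [ASG1.phiAt, G.glue_FL _ _ hq]
    rw [show (fOmega G.p G.r G.k G.τ i' j (ξ₁, ξ₂)) =
      Bspl G.p (G.p - G.r) G.k G.τ i' ξ₁ * Bspl G.p (G.p - G.r) G.k G.τ j ξ₂ from rfl]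
    rw [Finset.sum_congr rfl (fun i _ => by
      rw [show wSide G.p G.r G.k G.τ G.αL G.βL true (.inL i' j) i ξ₂ =
        (if i' = i then Bspl G.p (G.p - G.r) G.k G.τ j ξ₂ else 0) by
          simp [wSide]])]
    rw [sum_delta_mul he.2.1 _ _]
    ring
  | inR i' j =>
    rw [ASG1.phiAt, G.glue_FL _ _ hq]
    rw [Finset.sum_eq_zero]
    intro i _
    rw [show wSide G.p G.r G.k G.τ G.αL G.βL true (.inR i' j) i ξ₂ = 0 by simp [wSide]]
    rw [zero_mul]
  | g0 i0 =>
    rw [ASG1.phiAt, G.glue_FL _ _ hq]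
    rw [sum_two hn2 _ (fun i hi => by
      rw [show wSide G.p G.r G.k G.τ G.αL G.βL true (.g0 i0) i ξ₂ = 0 by
        simp only [wSide]; rw [if_neg (by omega), if_neg (by omega)]]
      rw [zero_mul])]
    rw [show wSide G.p G.r G.k G.τ G.αL G.βL true (.g0 i0) 0 ξ₂ =
      Bspl G.p (G.p - G.r - 1) G.k G.τ i0 ξ₂ from by simp only [wSide]; norm_num]
    rw [show wSide G.p G.r G.k G.τ G.αL G.βL true (.g0 i0) 1 ξ₂ =
      Bspl G.p (G.p - G.r - 1) G.k G.τ i0 ξ₂ +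
        G.βL ξ₂ * d01 (Bspl G.p (G.p - G.r - 1) G.k G.τ i0) ξ₂ * (G.τ 0 / (G.p : ℝ)) from by
      simp only [wSide]; norm_num]
    rw [show fGamma0 G.p G.r G.k G.τ G.βL i0 (ξ₁, ξ₂) =
      Bspl G.p (G.p - G.r - 1) G.k G.τ i0 ξ₂ *
        (Bspl G.p (G.p - G.r) G.k G.τ 0 ξ₁ + Bspl G.p (G.p - G.r) G.k G.τ 1 ξ₁) +
      G.βL ξ₂ * d01 (Bspl G.p (G.p - G.r - 1) G.k G.τ i0) ξ₂ * (G.τ 0 / (G.p : ℝ)) *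
        Bspl G.p (G.p - G.r) G.k G.τ 1 ξ₁ from rfl]
    ring
  | g1 i1 =>
    rw [ASG1.phiAt, G.glue_FL _ _ hq]
    rw [sum_two hn2 _ (fun i hi => by
      rw [show wSide G.p G.r G.k G.τ G.αL G.βL true (.g1 i1) i ξ₂ = 0 by
        simp only [wSide]; rw [if_neg (by omega)]]
      rw [zero_mul])]
    rw [show wSide G.p G.r G.k G.τ G.αL G.βL true (.g1 i1) 0 ξ₂ = 0 by simp [wSide]]
    rw [show wSide G.p G.r G.k G.τ G.αL G.βL true (.g1 i1) 1 ξ₂ =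
      G.αL ξ₂ * Bspl (G.p - 1) (G.p - G.r - 1) G.k G.τ i1 ξ₂ from by simp only [wSide]; norm_num]
    rw [show fGamma1 G.p G.r G.k G.τ G.αL i1 (ξ₁, ξ₂) =
      G.αL ξ₂ * Bspl (G.p - 1) (G.p - G.r - 1) G.k G.τ i1 ξ₂ *
        Bspl G.p (G.p - G.r) G.k G.τ 1 ξ₁ from rfl]
    ring

/-- Pullback of the basis functions to the right patch. -/
lemma pullR (G : ASG1) {e : PhiIdx} (he : e.valid G.p G.r G.k) {ξ₁ ξ₂ : ℝ}
    (h1 : 0 < ξ₁) (h2 : ξ₁ ≤ 1) (h3 : 0 ≤ ξ₂) (h4 : ξ₂ ≤ 1) :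
    G.phiAt G.k G.τ e (G.FR (ξ₁, ξ₂)) =
      ∑ i ∈ Finset.range (sdim G.p (G.p - G.r) G.k),
        wSide G.p G.r G.k G.τ G.αR G.βR false e i ξ₂ * Bspl G.p (G.p - G.r) G.k G.τ i ξ₁ := by
  have hq : ((ξ₁, ξ₂) : ℝ × ℝ) ∈ sq := mem_sq h1.le h2 h3 h4
  have hq1 : ((ξ₁, ξ₂) : ℝ × ℝ).1 ≠ 0 := ne_of_gt h1
  have hn2 : 2 ≤ sdim G.p (G.p - G.r) G.k := by
    have := G.hp; unfold sdim; omega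
  cases e with
  | inR i' j =>
    rw [ASG1.phiAt, G.glue_FR _ _ hq hq1]
    rw [show (fOmega G.p G.r G.k G.τ i' j (ξ₁, ξ₂)) =
      Bspl G.p (G.p - G.r) G.k G.τ i' ξ₁ * Bspl G.p (G.p - G.r) G.k G.τ j ξ₂ from rfl]
    rw [Finset.sum_congr rfl (fun i _ => by
      rw [show wSide G.p G.r G.k G.τ G.αR G.βR false (.inR i' j) i ξ₂ =
        (if i' = i then Bspl G.p (G.p - G.r) G.k G.τ j ξ₂ else 0) by
          simp [wSide]])]
    rw [sum_delta_mul he.2.1 _ _]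
    ring
  | inL i' j =>
    rw [ASG1.phiAt, G.glue_FR _ _ hq hq1]
    rw [Finset.sum_eq_zero]
    intro i _
    rw [show wSide G.p G.r G.k G.τ G.αR G.βR false (.inL i' j) i ξ₂ = 0 by simp [wSide]]
    rw [zero_mul]
  | g0 i0 =>
    rw [ASG1.phiAt, G.glue_FR _ _ hq hq1]
    rw [sum_two hn2 _ (fun i hi => by
      rw [show wSide G.p G.r G.k G.τ G.αR G.βR false (.g0 i0) i ξ₂ = 0 by
        simp only [wSide]; rw [if_neg (by omega), if_neg (by omega)]]
      rw [zero_mul])]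
    rw [show wSide G.p G.r G.k G.τ G.αR G.βR false (.g0 i0) 0 ξ₂ =
      Bspl G.p (G.p - G.r - 1) G.k G.τ i0 ξ₂ from by simp only [wSide]; norm_num]
    rw [show wSide G.p G.r G.k G.τ G.αR G.βR false (.g0 i0) 1 ξ₂ =
      Bspl G.p (G.p - G.r - 1) G.k G.τ i0 ξ₂ +
        G.βR ξ₂ * d01 (Bspl G.p (G.p - G.r - 1) G.k G.τ i0) ξ₂ * (G.τ 0 / (G.p : ℝ)) from by
      simp only [wSide]; norm_num]
    rw [show fGamma0 G.p G.r G.k G.τ G.βR i0 (ξ₁, ξ₂) =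
      Bspl G.p (G.p - G.r - 1) G.k G.τ i0 ξ₂ *
        (Bspl G.p (G.p - G.r) G.k G.τ 0 ξ₁ + Bspl G.p (G.p - G.r) G.k G.τ 1 ξ₁) +
      G.βR ξ₂ * d01 (Bspl G.p (G.p - G.r - 1) G.k G.τ i0) ξ₂ * (G.τ 0 / (G.p : ℝ)) *
        Bspl G.p (G.p - G.r) G.k G.τ 1 ξ₁ from rfl]
    ring
  | g1 i1 =>
    rw [ASG1.phiAt, G.glue_FR _ _ hq hq1]
    rw [sum_two hn2 _ (fun i hi => by
      rw [show wSide G.p G.r G.k G.τ G.αR G.βR false (.g1 i1) i ξ₂ = 0 by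
        simp only [wSide]; rw [if_neg (by omega)]]
      rw [zero_mul])]
    rw [show wSide G.p G.r G.k G.τ G.αR G.βR false (.g1 i1) 0 ξ₂ = 0 by simp [wSide]]
    rw [show wSide G.p G.r G.k G.τ G.αR G.βR false (.g1 i1) 1 ξ₂ =
      G.αR ξ₂ * Bspl (G.p - 1) (G.p - G.r - 1) G.k G.τ i1 ξ₂ from by simp only [wSide]; norm_num]
    rw [show fGamma1 G.p G.r G.k G.τ G.αR i1 (ξ₁, ξ₂) =
      G.αR ξ₂ * Bspl (G.p - 1) (G.p - G.r - 1) G.k G.τ i1 ξ₂ *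
        Bspl G.p (G.p - G.r) G.k G.τ 1 ξ₁ from rfl]
    ring

end Glue


section Decomp

variable {p r k : ℕ} {τ : ℕ → ℝ} {α β : ℝ → ℝ}

lemma w_decomp_int_L {e : PhiIdx} (he : e.valid p r k) {i : ℕ} (hi2 : 2 ≤ i) (y : ℝ) :
    wSide p r k τ α β true e i y =
      ∑ j' ∈ Finset.range (sdim p (p - r) k),
        (if e = PhiIdx.inL i j' then (1 : ℝ) else 0) * Bspl p (p - r) k τ j' y := by
  cases e with
  | inL i' j =>
    simp only [wSide]
    by_cases hii : i' = i
    · rw [if_pos ⟨trivial, hii⟩]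
      subst hii
      rw [Finset.sum_eq_single j]
      · rw [if_pos rfl, one_mul]
      · intro j' _ hne
        rw [if_neg, zero_mul]
        intro h
        injection h with h1 h2
        exact hne h2.symm
      · intro h
        exact absurd (Finset.mem_range.mpr he.2.2) h
    · rw [if_neg (fun h => hii h.2)]
      symm
      apply Finset.sum_eq_zero
      intro j' _
      rw [if_neg, zero_mul]
      intro h
      injection h with h1 h2
      exact hii h1
  | inR i' j =>
    simp only [wSide]
    rw [if_neg (by simp)]
    symm
    apply Finset.sum_eq_zero
    intro j' _
    rw [if_neg (fun h => PhiIdx.noConfusion h), zero_mul]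
  | g0 i0 =>
    simp only [wSide]
    rw [if_neg (by omega), if_neg (by omega)]
    symm
    apply Finset.sum_eq_zero
    intro j' _
    rw [if_neg (fun h => PhiIdx.noConfusion h), zero_mul]
  | g1 i1 =>
    simp only [wSide]
    rw [if_neg (by omega)]
    symm
    apply Finset.sum_eq_zero
    intro j' _
    rw [if_neg (fun h => PhiIdx.noConfusion h), zero_mul]

lemma w_decomp_int_R {e : PhiIdx} (he : e.valid p r k) {i : ℕ} (hi2 : 2 ≤ i) (y : ℝ) :
    wSide p r k τ α β false e i y =
      ∑ j' ∈ Finset.range (sdim p (p - r) k),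
        (if e = PhiIdx.inR i j' then (1 : ℝ) else 0) * Bspl p (p - r) k τ j' y := by
  cases e with
  | inR i' j =>
    simp only [wSide]
    by_cases hii : i' = i
    · rw [if_pos ⟨trivial, hii⟩]
      subst hii
      rw [Finset.sum_eq_single j]
      · rw [if_pos rfl, one_mul]
      · intro j' _ hne
        rw [if_neg, zero_mul]
        intro h
        injection h with h1 h2
        exact hne h2.symm
      · intro h
        exact absurd (Finset.mem_range.mpr he.2.2) h
    · rw [if_neg (fun h => hii h.2)]
      symm
      apply Finset.sum_eq_zero
      intro j' _
      rw [if_neg, zero_mul]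
      intro h
      injection h with h1 h2
      exact hii h1
  | inL i' j =>
    simp only [wSide]
    rw [if_neg (by simp)]
    symm
    apply Finset.sum_eq_zero
    intro j' _
    rw [if_neg (fun h => PhiIdx.noConfusion h), zero_mul]
  | g0 i0 =>
    simp only [wSide]
    rw [if_neg (by omega), if_neg (by omega)]
    symm
    apply Finset.sum_eq_zero
    intro j' _
    rw [if_neg (fun h => PhiIdx.noConfusion h), zero_mul]
  | g1 i1 =>
    simp only [wSide]
    rw [if_neg (by omega)]
    symm
    apply Finset.sum_eq_zero
    intro j' _
    rw [if_neg (fun h => PhiIdx.noConfusion h), zero_mul]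

lemma w_decomp_g0 {side : Bool} {e : PhiIdx} (he : e.valid p r k) (y : ℝ) :
    wSide p r k τ α β side e 0 y =
      ∑ i0 ∈ Finset.range (sdim p (p - r - 1) k),
        (if e = PhiIdx.g0 i0 then (1 : ℝ) else 0) * Bspl p (p - r - 1) k τ i0 y := by
  cases e with
  | inL i' j =>
    simp only [wSide]
    rw [if_neg (fun h => by have := he.1; omega)]
    symm
    apply Finset.sum_eq_zero
    intro i0 _
    rw [if_neg (fun h => PhiIdx.noConfusion h), zero_mul]
  | inR i' j =>
    simp only [wSide]
    rw [if_neg (fun h => by have := he.1; omega)]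
    symm
    apply Finset.sum_eq_zero
    intro i0 _
    rw [if_neg (fun h => PhiIdx.noConfusion h), zero_mul]
  | g0 i0 =>
    simp only [wSide]
    rw [if_pos trivial]
    rw [Finset.sum_eq_single i0]
    · rw [if_pos rfl, one_mul]
    · intro i0' _ hne
      rw [if_neg, zero_mul]
      intro h
      injection h with h1
      exact hne h1.symm
    · intro h
      exact absurd (Finset.mem_range.mpr he) h
  | g1 i1 =>
    simp only [wSide]
    rw [if_neg (by omega)]
    symm
    apply Finset.sum_eq_zero
    intro i0 _
    rw [if_neg (fun h => PhiIdx.noConfusion h), zero_mul]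

lemma w_decomp_g1 {side : Bool} {e : PhiIdx} (he : e.valid p r k)
    (hng0 : ∀ i0, e ≠ PhiIdx.g0 i0) (y : ℝ) :
    wSide p r k τ α β side e 1 y =
      α y * ∑ i1 ∈ Finset.range (sdim (p - 1) (p - r - 1) k),
        (if e = PhiIdx.g1 i1 then (1 : ℝ) else 0) * Bspl (p - 1) (p - r - 1) k τ i1 y := by
  cases e with
  | inL i' j =>
    simp only [wSide]
    rw [if_neg (fun h => by have := he.1; omega)]
    rw [Finset.sum_eq_zero, mul_zero]
    intro i1 _
    rw [if_neg (fun h => PhiIdx.noConfusion h), zero_mul]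
  | inR i' j =>
    simp only [wSide]
    rw [if_neg (fun h => by have := he.1; omega)]
    rw [Finset.sum_eq_zero, mul_zero]
    intro i1 _
    rw [if_neg (fun h => PhiIdx.noConfusion h), zero_mul]
  | g0 i0 => exact absurd rfl (hng0 i0)
  | g1 i1 =>
    simp only [wSide]
    rw [if_pos trivial]
    congr 1
    rw [Finset.sum_eq_single i1]
    · rw [if_pos rfl, one_mul]
    · intro i1' _ hne
      rw [if_neg, zero_mul]
      intro h
      injection h with h1
      exact hne h1.symm
    · intro h
      exact absurd (Finset.mem_range.mpr he) h

end Decomp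

/-- The functions of `Φ` are linearly independent as
functions on `Ω`; hence `Φ` is a basis of the `C¹` isogeometric space
`W = span Φ`. -/
theorem phi_linearly_independent (G : ASG1) :
    LinearIndependent ℝ
      (fun e : {e : PhiIdx // e.valid G.p G.r G.k} =>
        G.dom.restrict (G.phiAt G.k G.τ e.1)) ∧
    ∃ b : Module.Basis {e : PhiIdx // e.valid G.p G.r G.k} ℝ
        ↥(Submodule.span ℝ (Set.range (fun e : {e : PhiIdx // e.valid G.p G.r G.k} =>
            G.dom.restrict (G.phiAt G.k G.τ e.1)))),
      ∀ e : {e : PhiIdx // e.valid G.p G.r G.k},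
        (b e).val = G.dom.restrict (G.phiAt G.k G.τ e.1) := by
  have hp := G.hp
  have hr := G.hr
  have hrp := G.hrp
  have hple : 2 + G.r ≤ G.p := by omega
  have hm1 : 1 ≤ G.p - G.r := by omega
  have hmd1 : G.p - G.r ≤ G.p := by omega
  have hm0 : 1 ≤ G.p - G.r - 1 := by omega
  have hmd0 : G.p - G.r - 1 ≤ G.p := by omega
  have hmdm : G.p - G.r - 1 ≤ G.p - 1 := by omega
  have hli : LinearIndependent ℝ (fun e : {e : PhiIdx // e.valid G.p G.r G.k} =>
      G.dom.restrict (G.phiAt G.k G.τ e.1)) := by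
    rw [linearIndependent_iff']
    intro s g hsum e he
    have hpt : ∀ z ∈ G.dom, ∑ e' ∈ s, g e' * G.phiAt G.k G.τ e'.1 z = 0 := by
      intro z hz
      have := congrFun hsum ⟨z, hz⟩
      simpa [Finset.sum_apply, Set.restrict] using this
    -- Stage 1 (left patch): the coefficient functions of the `ξ₁`-B-splines vanish.
    have hCL : ∀ ξ₂ ∈ Set.Ioo (0 : ℝ) 1, ∀ i < sdim G.p (G.p - G.r) G.k,
        ∑ e' ∈ s, g e' * wSide G.p G.r G.k G.τ G.αL G.βL true e'.1 i ξ₂ = 0 := by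
      intro ξ₂ hξ₂
      apply bspl_li hm1 hmd1 G.hτpos G.hτlt G.hτmono
      intro ξ₁ hξ₁
      have hdom : G.FL (ξ₁, ξ₂) ∈ G.dom :=
        Or.inl ⟨_, mem_sq hξ₁.1.le hξ₁.2.le hξ₂.1.le hξ₂.2.le, rfl⟩
      calc
        ∑ i ∈ Finset.range (sdim G.p (G.p - G.r) G.k),
            (∑ e' ∈ s, g e' * wSide G.p G.r G.k G.τ G.αL G.βL true e'.1 i ξ₂) *
              Bspl G.p (G.p - G.r) G.k G.τ i ξ₁
            = ∑ i ∈ Finset.range (sdim G.p (G.p - G.r) G.k), ∑ e' ∈ s,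
                g e' * (wSide G.p G.r G.k G.τ G.αL G.βL true e'.1 i ξ₂ *
                  Bspl G.p (G.p - G.r) G.k G.τ i ξ₁) := by
          refine Finset.sum_congr rfl fun i _ => ?_
          rw [Finset.sum_mul]
          exact Finset.sum_congr rfl fun e' _ => by ring
        _ = ∑ e' ∈ s, ∑ i ∈ Finset.range (sdim G.p (G.p - G.r) G.k),
                g e' * (wSide G.p G.r G.k G.τ G.αL G.βL true e'.1 i ξ₂ *
                  Bspl G.p (G.p - G.r) G.k G.τ i ξ₁) := Finset.sum_comm
        _ = ∑ e' ∈ s, g e' * G.phiAt G.k G.τ e'.1 (G.FL (ξ₁, ξ₂)) := by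
          refine Finset.sum_congr rfl fun e' _ => ?_
          rw [pullL G e'.2 hξ₁.1.le hξ₁.2.le hξ₂.1.le hξ₂.2.le, Finset.mul_sum]
        _ = 0 := hpt _ hdom
    -- Stage 1 (right patch).
    have hCR : ∀ ξ₂ ∈ Set.Ioo (0 : ℝ) 1, ∀ i < sdim G.p (G.p - G.r) G.k,
        ∑ e' ∈ s, g e' * wSide G.p G.r G.k G.τ G.αR G.βR false e'.1 i ξ₂ = 0 := by
      intro ξ₂ hξ₂
      apply bspl_li hm1 hmd1 G.hτpos G.hτlt G.hτmono
      intro ξ₁ hξ₁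
      have hdom : G.FR (ξ₁, ξ₂) ∈ G.dom :=
        Or.inr ⟨_, mem_sq hξ₁.1.le hξ₁.2.le hξ₂.1.le hξ₂.2.le, rfl⟩
      calc
        ∑ i ∈ Finset.range (sdim G.p (G.p - G.r) G.k),
            (∑ e' ∈ s, g e' * wSide G.p G.r G.k G.τ G.αR G.βR false e'.1 i ξ₂) *
              Bspl G.p (G.p - G.r) G.k G.τ i ξ₁
            = ∑ i ∈ Finset.range (sdim G.p (G.p - G.r) G.k), ∑ e' ∈ s,
                g e' * (wSide G.p G.r G.k G.τ G.αR G.βR false e'.1 i ξ₂ *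
                  Bspl G.p (G.p - G.r) G.k G.τ i ξ₁) := by
          refine Finset.sum_congr rfl fun i _ => ?_
          rw [Finset.sum_mul]
          exact Finset.sum_congr rfl fun e' _ => by ring
        _ = ∑ e' ∈ s, ∑ i ∈ Finset.range (sdim G.p (G.p - G.r) G.k),
                g e' * (wSide G.p G.r G.k G.τ G.αR G.βR false e'.1 i ξ₂ *
                  Bspl G.p (G.p - G.r) G.k G.τ i ξ₁) := Finset.sum_comm
        _ = ∑ e' ∈ s, g e' * G.phiAt G.k G.τ e'.1 (G.FR (ξ₁, ξ₂)) := by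
          refine Finset.sum_congr rfl fun e' _ => ?_
          rw [pullR G e'.2 hξ₁.1 hξ₁.2.le hξ₂.1.le hξ₂.2.le, Finset.mul_sum]
        _ = 0 := hpt _ hdom
    -- Stage 2: interior coefficients (left patch).
    have hintL : ∀ i j : ℕ, 2 ≤ i → i < sdim G.p (G.p - G.r) G.k →
        ∀ e' ∈ s, e'.1 = PhiIdx.inL i j → g e' = 0 := by
      intro i j hi2 hin e' he's heq
      have hjn : j < sdim G.p (G.p - G.r) G.k := by
        have hv := e'.2
        rw [heq] at hv
        exact hv.2.2
      have hD : ∀ j' < sdim G.p (G.p - G.r) G.k,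
          ∑ e'' ∈ s, g e'' * (if e''.1 = PhiIdx.inL i j' then (1 : ℝ) else 0) = 0 := by
        apply bspl_li hm1 hmd1 G.hτpos G.hτlt G.hτmono
        intro ξ₂ hξ₂
        calc
          ∑ j' ∈ Finset.range (sdim G.p (G.p - G.r) G.k),
              (∑ e'' ∈ s, g e'' * (if e''.1 = PhiIdx.inL i j' then (1 : ℝ) else 0)) *
                Bspl G.p (G.p - G.r) G.k G.τ j' ξ₂
              = ∑ e'' ∈ s, ∑ j' ∈ Finset.range (sdim G.p (G.p - G.r) G.k),
                  g e'' * ((if e''.1 = PhiIdx.inL i j' then (1 : ℝ) else 0) *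
                    Bspl G.p (G.p - G.r) G.k G.τ j' ξ₂) := by
            rw [Finset.sum_comm]
            refine Finset.sum_congr rfl fun j' _ => ?_
            rw [Finset.sum_mul]
            exact Finset.sum_congr rfl fun e'' _ => by ring
          _ = ∑ e'' ∈ s, g e'' * wSide G.p G.r G.k G.τ G.αL G.βL true e''.1 i ξ₂ := by
            refine Finset.sum_congr rfl fun e'' _ => ?_
            rw [w_decomp_int_L e''.2 hi2, Finset.mul_sum]
          _ = 0 := hCL ξ₂ hξ₂ i hin
      have hD2 := hD j hjn
      rw [Finset.sum_eq_single e'] at hD2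
      · rwa [heq, if_pos rfl, mul_one] at hD2
      · intro b hb hne
        rw [if_neg, mul_zero]
        intro hb2
        exact hne (Subtype.ext (hb2.trans heq.symm))
      · intro h
        exact absurd he's h
    -- Stage 2: interior coefficients (right patch).
    have hintR : ∀ i j : ℕ, 2 ≤ i → i < sdim G.p (G.p - G.r) G.k →
        ∀ e' ∈ s, e'.1 = PhiIdx.inR i j → g e' = 0 := by
      intro i j hi2 hin e' he's heq
      have hjn : j < sdim G.p (G.p - G.r) G.k := by
        have hv := e'.2
        rw [heq] at hv
        exact hv.2.2
      have hD : ∀ j' < sdim G.p (G.p - G.r) G.k,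
          ∑ e'' ∈ s, g e'' * (if e''.1 = PhiIdx.inR i j' then (1 : ℝ) else 0) = 0 := by
        apply bspl_li hm1 hmd1 G.hτpos G.hτlt G.hτmono
        intro ξ₂ hξ₂
        calc
          ∑ j' ∈ Finset.range (sdim G.p (G.p - G.r) G.k),
              (∑ e'' ∈ s, g e'' * (if e''.1 = PhiIdx.inR i j' then (1 : ℝ) else 0)) *
                Bspl G.p (G.p - G.r) G.k G.τ j' ξ₂
              = ∑ e'' ∈ s, ∑ j' ∈ Finset.range (sdim G.p (G.p - G.r) G.k),
                  g e'' * ((if e''.1 = PhiIdx.inR i j' then (1 : ℝ) else 0) *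
                    Bspl G.p (G.p - G.r) G.k G.τ j' ξ₂) := by
            rw [Finset.sum_comm]
            refine Finset.sum_congr rfl fun j' _ => ?_
            rw [Finset.sum_mul]
            exact Finset.sum_congr rfl fun e'' _ => by ring
          _ = ∑ e'' ∈ s, g e'' * wSide G.p G.r G.k G.τ G.αR G.βR false e''.1 i ξ₂ := by
            refine Finset.sum_congr rfl fun e'' _ => ?_
            rw [w_decomp_int_R e''.2 hi2, Finset.mul_sum]
          _ = 0 := hCR ξ₂ hξ₂ i hin
      have hD2 := hD j hjn
      rw [Finset.sum_eq_single e'] at hD2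
      · rwa [heq, if_pos rfl, mul_one] at hD2
      · intro b hb hne
        rw [if_neg, mul_zero]
        intro hb2
        exact hne (Subtype.ext (hb2.trans heq.symm))
      · intro h
        exact absurd he's h
    -- Stage 3: interface coefficients of `φ_{Γ₀,·}`.
    have hg0 : ∀ i0 : ℕ, ∀ e' ∈ s, e'.1 = PhiIdx.g0 i0 → g e' = 0 := by
      intro i0 e' he's heq
      have hi0n : i0 < sdim G.p (G.p - G.r - 1) G.k := by
        have hv := e'.2
        rw [heq] at hv
        exact hv
      have hn2 : 0 < sdim G.p (G.p - G.r) G.k := by unfold sdim; omega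
      have hE : ∀ i0' < sdim G.p (G.p - G.r - 1) G.k,
          ∑ e'' ∈ s, g e'' * (if e''.1 = PhiIdx.g0 i0' then (1 : ℝ) else 0) = 0 := by
        apply bspl_li hm0 hmd0 G.hτpos G.hτlt G.hτmono
        intro ξ₂ hξ₂
        calc
          ∑ i0' ∈ Finset.range (sdim G.p (G.p - G.r - 1) G.k),
              (∑ e'' ∈ s, g e'' * (if e''.1 = PhiIdx.g0 i0' then (1 : ℝ) else 0)) *
                Bspl G.p (G.p - G.r - 1) G.k G.τ i0' ξ₂
              = ∑ e'' ∈ s, ∑ i0' ∈ Finset.range (sdim G.p (G.p - G.r - 1) G.k),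
                  g e'' * ((if e''.1 = PhiIdx.g0 i0' then (1 : ℝ) else 0) *
                    Bspl G.p (G.p - G.r - 1) G.k G.τ i0' ξ₂) := by
            rw [Finset.sum_comm]
            refine Finset.sum_congr rfl fun i0' _ => ?_
            rw [Finset.sum_mul]
            exact Finset.sum_congr rfl fun e'' _ => by ring
          _ = ∑ e'' ∈ s, g e'' * wSide G.p G.r G.k G.τ G.αL G.βL true e''.1 0 ξ₂ := by
            refine Finset.sum_congr rfl fun e'' _ => ?_
            rw [w_decomp_g0 e''.2, Finset.mul_sum]
          _ = 0 := hCL ξ₂ hξ₂ 0 hn2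
      have hE2 := hE i0 hi0n
      rw [Finset.sum_eq_single e'] at hE2
      · rwa [heq, if_pos rfl, mul_one] at hE2
      · intro b hb hne
        rw [if_neg, mul_zero]
        intro hb2
        exact hne (Subtype.ext (hb2.trans heq.symm))
      · intro h
        exact absurd he's h
    -- Stage 4: interface coefficients of `φ_{Γ₁,·}`.
    have hg1 : ∀ i1 : ℕ, ∀ e' ∈ s, e'.1 = PhiIdx.g1 i1 → g e' = 0 := by
      intro i1 e' he's heq
      have hi1n : i1 < sdim (G.p - 1) (G.p - G.r - 1) G.k := by
        have hv := e'.2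
        rw [heq] at hv
        exact hv
      have hn2 : 1 < sdim G.p (G.p - G.r) G.k := by unfold sdim; omega
      have hF : ∀ i1' < sdim (G.p - 1) (G.p - G.r - 1) G.k,
          ∑ e'' ∈ s, g e'' * (if e''.1 = PhiIdx.g1 i1' then (1 : ℝ) else 0) = 0 := by
        apply bspl_li hm0 hmdm G.hτpos G.hτlt G.hτmono
        intro ξ₂ hξ₂
        have hα : G.αL ξ₂ ≠ 0 := by
          intro h0
          have := G.hαneg ξ₂ ⟨hξ₂.1.le, hξ₂.2.le⟩
          rw [h0, zero_mul] at this
          exact lt_irrefl 0 this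
        have key : G.αL ξ₂ * ∑ i1' ∈ Finset.range (sdim (G.p - 1) (G.p - G.r - 1) G.k),
            (∑ e'' ∈ s, g e'' * (if e''.1 = PhiIdx.g1 i1' then (1 : ℝ) else 0)) *
              Bspl (G.p - 1) (G.p - G.r - 1) G.k G.τ i1' ξ₂ = 0 := by
          calc
            G.αL ξ₂ * ∑ i1' ∈ Finset.range (sdim (G.p - 1) (G.p - G.r - 1) G.k),
                (∑ e'' ∈ s, g e'' * (if e''.1 = PhiIdx.g1 i1' then (1 : ℝ) else 0)) *
                  Bspl (G.p - 1) (G.p - G.r - 1) G.k G.τ i1' ξ₂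
                = ∑ e'' ∈ s, g e'' *
                    (G.αL ξ₂ * ∑ i1' ∈ Finset.range (sdim (G.p - 1) (G.p - G.r - 1) G.k),
                      (if e''.1 = PhiIdx.g1 i1' then (1 : ℝ) else 0) *
                        Bspl (G.p - 1) (G.p - G.r - 1) G.k G.τ i1' ξ₂) := by
              rw [Finset.mul_sum]
              rw [Finset.sum_congr rfl (fun i1' _ => by
                rw [Finset.sum_mul, Finset.mul_sum])]
              rw [Finset.sum_comm]
              refine Finset.sum_congr rfl fun e'' _ => ?_
              rw [Finset.mul_sum, Finset.mul_sum]
              exact Finset.sum_congr rfl fun i1' _ => by ring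
            _ = ∑ e'' ∈ s, g e'' * wSide G.p G.r G.k G.τ G.αL G.βL true e''.1 1 ξ₂ := by
              refine Finset.sum_congr rfl fun e'' he''s => ?_
              by_cases hng : ∃ i0, e''.1 = PhiIdx.g0 i0
              · obtain ⟨i0, hi0⟩ := hng
                rw [hg0 i0 e'' he''s hi0, zero_mul, zero_mul]
              · push_neg at hng
                rw [w_decomp_g1 e''.2 hng]
            _ = 0 := hCL ξ₂ hξ₂ 1 hn2
        rcases mul_eq_zero.mp key with h | h
        · exact absurd h hα
        · exact h
      have hF2 := hF i1 hi1n
      rw [Finset.sum_eq_single e'] at hF2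
      · rwa [heq, if_pos rfl, mul_one] at hF2
      · intro b hb hne
        rw [if_neg, mul_zero]
        intro hb2
        exact hne (Subtype.ext (hb2.trans heq.symm))
      · intro h
        exact absurd he's h
    -- Put everything together.
    obtain ⟨idx, hv⟩ := e
    cases idx with
    | inL i j => exact hintL i j hv.1 hv.2.1 _ he rfl
    | inR i j => exact hintR i j hv.1 hv.2.1 _ he rfl
    | g0 i0 => exact hg0 i0 _ he rfl
    | g1 i1 => exact hg1 i1 _ he rfl
  exact ⟨hli, Module.Basis.span hli, fun e => congrArg Subtype.val (Module.Basis.span_apply hli e)⟩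

end TwoPatch
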